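/- arXiv:2512.15487 — 3 statements merged into one kernel-verified Lean document; each statement's English description precedes it below -/
import Mathlib

section
/- For each r > 3/2 the space Y^r is continuously embedded in the space of bounded continuous functions on ℝ²; that is, |u|_∞ ≲ |u|_{Y^r} and every u ∈ Y^r has a bounded continuous representative. -/
open MeasureTheory Filter

/-- The inverse Fourier transform on ℝ². -/
noncomputable def invFT (g : ℝ × ℝ → ℂ) : ℝ × ℝ → ℂ := fun x =>
  ∫ k : ℝ × ℝ, Complex.exp (((2 * Real.pi * (x.1 * k.1 + x.2 * k.2) : ℝ) : ℂ) * Complex.I) * g k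

/-- The anisotropic KP weight `(1 + k₁² + k₂²/k₁²)^r`. -/
noncomputable def wgt (r : ℝ) (k : ℝ × ℝ) : ℝ := (1 + k.1 ^ 2 + k.2 ^ 2 / k.1 ^ 2) ^ r

/-- The squared `Y^r` norm, computed on the Fourier side. -/
noncomputable def YnormSq (r : ℝ) (g : ℝ × ℝ → ℂ) : ℝ := ∫ k : ℝ × ℝ, wgt r k * ‖g k‖ ^ 2

lemma base_integrable {s : ℝ} (hs : 1/2 < s) :
    Integrable (fun t : ℝ => (1 + t ^ 2) ^ (-s)) := by
  have h : ((Module.finrank ℝ ℝ : ℝ)) < 2 * s := by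
    simp [Module.finrank_self]; linarith
  have h2 := integrable_rpow_neg_one_add_norm_sq (E := ℝ) (μ := volume) h
  refine h2.congr (Eventually.of_forall fun t => ?_)
  simp only [Real.norm_eq_abs, sq_abs]
  congr 1; ring

lemma slice_eq (r : ℝ) {a : ℝ} (ha : a ≠ 0) (t : ℝ) :
    (1 + a ^ 2 + t ^ 2 / a ^ 2) ^ (-r)
      = (1 + a ^ 2) ^ (-r) * (1 + ((a⁻¹ * (1 + a ^ 2) ^ (-(1:ℝ)/2)) * t) ^ 2) ^ (-r) := by
  have hA : (0:ℝ) < 1 + a ^ 2 := by positivity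
  rw [← Real.mul_rpow hA.le (by positivity)]
  congr 1
  have hc : ((1 + a ^ 2) ^ (-(1:ℝ)/2)) ^ 2 = (1 + a ^ 2)⁻¹ := by
    rw [← Real.rpow_natCast ((1 + a ^ 2) ^ (-(1:ℝ)/2)) 2, ← Real.rpow_mul hA.le]
    norm_num [Real.rpow_neg_one]
  field_simp
  ring_nf
  rw [hc]
  field_simp
  ring

lemma slice_integral (r : ℝ) {a : ℝ} (ha : a ≠ 0) :
    ∫ t : ℝ, (1 + a ^ 2 + t ^ 2 / a ^ 2) ^ (-r)
      = |a| * (1 + a ^ 2) ^ ((1:ℝ)/2 - r) * ∫ t : ℝ, (1 + t ^ 2) ^ (-r) := by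
  have hA : (0:ℝ) < 1 + a ^ 2 := by positivity
  set c : ℝ := a⁻¹ * (1 + a ^ 2) ^ (-(1:ℝ)/2) with hc
  have hcne : c ≠ 0 := by
    apply mul_ne_zero (inv_ne_zero ha)
    exact (Real.rpow_pos_of_pos hA _).ne'
  calc ∫ t : ℝ, (1 + a ^ 2 + t ^ 2 / a ^ 2) ^ (-r)
      = ∫ t : ℝ, (1 + a ^ 2) ^ (-r) * (1 + (c * t) ^ 2) ^ (-r) := by
        exact integral_congr_ae (Eventually.of_forall fun t => slice_eq r ha t)
    _ = (1 + a ^ 2) ^ (-r) * ∫ t : ℝ, (1 + (c * t) ^ 2) ^ (-r) := integral_const_mul _ _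
    _ = (1 + a ^ 2) ^ (-r) * (|c⁻¹| • ∫ t : ℝ, (1 + t ^ 2) ^ (-r)) := by
        rw [MeasureTheory.Measure.integral_comp_mul_left (fun t => (1 + t ^ 2) ^ (-r)) c]
    _ = |a| * (1 + a ^ 2) ^ ((1:ℝ)/2 - r) * ∫ t : ℝ, (1 + t ^ 2) ^ (-r) := by
        rw [hc, mul_inv, inv_inv, ← Real.rpow_neg_one, ← Real.rpow_mul hA.le]
        rw [abs_mul, abs_of_nonneg (Real.rpow_nonneg hA.le _), smul_eq_mul]
        rw [show (-(1:ℝ)/2 * -1) = (1:ℝ)/2 by norm_num]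
        rw [show ((1:ℝ)/2 - r) = (1:ℝ)/2 + (-r) by ring, Real.rpow_add hA]
        ring

lemma ae_ne_zero : ∀ᵐ x : ℝ, x ≠ 0 := by
  rw [ae_iff]
  simpa using Real.volume_singleton (a := 0)

lemma W_meas (r : ℝ) : Measurable (fun k : ℝ × ℝ => (1 + k.1 ^ 2 + k.2 ^ 2 / k.1 ^ 2) ^ (-r)) := by
  fun_prop

lemma slice_integrable (r : ℝ) (hr : 1/2 < r) {a : ℝ} (ha : a ≠ 0) :
    Integrable (fun t : ℝ => (1 + a ^ 2 + t ^ 2 / a ^ 2) ^ (-r)) := by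
  have hA : (0:ℝ) < 1 + a ^ 2 := by positivity
  set c : ℝ := a⁻¹ * (1 + a ^ 2) ^ (-(1:ℝ)/2) with hc
  have hcne : c ≠ 0 := mul_ne_zero (inv_ne_zero ha) (Real.rpow_pos_of_pos hA _).ne'
  have h1 : Integrable (fun t : ℝ => (1 + (c * t) ^ 2) ^ (-r)) := by
    exact (MeasureTheory.integrable_comp_mul_left_iff
      (fun t => (1 + t ^ 2) ^ (-r)) hcne).2 (base_integrable hr)
  refine (h1.const_mul ((1 + a ^ 2) ^ (-r))).congr
    (Eventually.of_forall fun t => (slice_eq r ha t).symm)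

lemma W_integrable (r : ℝ) (hr : 3/2 < r) :
    Integrable (fun k : ℝ × ℝ => (1 + k.1 ^ 2 + k.2 ^ 2 / k.1 ^ 2) ^ (-r)) := by
  have hr2 : 1/2 < r := by linarith
  have hmeas := (W_meas r).aestronglyMeasurable (μ := volume)
  rw [MeasureTheory.Measure.volume_eq_prod ℝ ℝ] at hmeas ⊢
  refine (integrable_prod_iff hmeas).2 ⟨?_, ?_⟩
  · filter_upwards [ae_ne_zero] with a ha
    exact slice_integrable r hr2 ha
  · set J : ℝ := ∫ t : ℝ, (1 + t ^ 2) ^ (-r) with hJ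
    have hφ : Integrable (fun a : ℝ => |a| * (1 + a ^ 2) ^ ((1:ℝ)/2 - r) * J) := by
      have hbase : Integrable (fun a : ℝ => (1 + a ^ 2) ^ (-(r - 1)) * |J|) :=
        (base_integrable (by linarith : 1/2 < r - 1)).mul_const _
      refine hbase.mono' ?_ (Eventually.of_forall fun a => ?_)
      · apply Measurable.aestronglyMeasurable
        apply Measurable.mul_const
        fun_prop
      · have hA : (0:ℝ) < 1 + a ^ 2 := by positivity
        have habs : |a| ≤ (1 + a ^ 2) ^ ((1:ℝ)/2) := by
          rw [← Real.sqrt_eq_rpow, ← Real.sqrt_sq_eq_abs]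
          exact Real.sqrt_le_sqrt (by nlinarith)
        calc ‖|a| * (1 + a ^ 2) ^ ((1:ℝ)/2 - r) * J‖
            = |a| * (1 + a ^ 2) ^ ((1:ℝ)/2 - r) * |J| := by
              rw [norm_mul, norm_mul, Real.norm_eq_abs, Real.norm_eq_abs, Real.norm_eq_abs,
                abs_abs, abs_of_nonneg (Real.rpow_nonneg hA.le _)]
          _ ≤ (1 + a ^ 2) ^ ((1:ℝ)/2) * (1 + a ^ 2) ^ ((1:ℝ)/2 - r) * |J| := by
              gcongr
          _ = (1 + a ^ 2) ^ (-(r - 1)) * |J| := by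
              rw [← Real.rpow_add hA, show (1:ℝ)/2 + ((1:ℝ)/2 - r) = -(r-1) by ring]
    refine hφ.congr ?_
    filter_upwards [ae_ne_zero] with a ha
    have hnn : ∀ t : ℝ, (0:ℝ) ≤ (1 + a ^ 2 + t ^ 2 / a ^ 2) ^ (-r) := fun t =>
      Real.rpow_nonneg (by positivity) _
    rw [← slice_integral r ha]
    exact integral_congr_ae (Eventually.of_forall fun t => (Real.norm_of_nonneg (hnn t)).symm)

/-- For `r > 3/2` the space `Y^r` is continuously embedded in `C_b(ℝ²)`:
if `u` has Fourier transform `g` with finite `Y^r` norm, then `u` is bounded and continuous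
with `|u|_∞ ≲ |u|_{Y^r}`. -/
theorem stmt2 (r : ℝ) (hr : 3 / 2 < r) :
    ∃ C > (0 : ℝ), ∀ g : ℝ × ℝ → ℂ, Measurable g →
      Integrable (fun k => wgt r k * ‖g k‖ ^ 2) →
      Continuous (invFT g) ∧ ∀ p : ℝ × ℝ, ‖invFT g p‖ ≤ C * Real.sqrt (YnormSq r g) := by
  have hbase : ∀ k : ℝ × ℝ, (0:ℝ) < 1 + k.1 ^ 2 + k.2 ^ 2 / k.1 ^ 2 := fun k => by positivity
  have hwpos : ∀ k, 0 < wgt r k := fun k => Real.rpow_pos_of_pos (hbase k) r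
  have hWinv : ∀ k : ℝ × ℝ, (wgt r k)⁻¹ = (1 + k.1 ^ 2 + k.2 ^ 2 / k.1 ^ 2) ^ (-r) := fun k => by
    rw [wgt, ← Real.rpow_neg (hbase k).le]
  have hWint : Integrable (fun k : ℝ × ℝ => (wgt r k)⁻¹) :=
    (W_integrable r hr).congr (Eventually.of_forall fun k => (hWinv k).symm)
  set A : ℝ := ∫ k : ℝ × ℝ, (wgt r k)⁻¹ with hAdef
  refine ⟨Real.sqrt A + 1, by positivity, fun g hg hInt => ?_⟩
  have hwm : Measurable (wgt r) := by unfold wgt; fun_prop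
  set f1 : ℝ × ℝ → ℝ := fun k => Real.sqrt ((wgt r k)⁻¹) with hf1def
  set f2 : ℝ × ℝ → ℝ := fun k => Real.sqrt (wgt r k) * ‖g k‖ with hf2def
  have hf1m : Measurable f1 := by fun_prop
  have hf2m : Measurable f2 := by fun_prop
  have hmul : ∀ k, f1 k * f2 k = ‖g k‖ := fun k => by
    rw [hf1def, hf2def]
    simp only [← mul_assoc, ← Real.sqrt_mul (inv_nonneg.2 (hwpos k).le),
      inv_mul_cancel₀ (hwpos k).ne', Real.sqrt_one, one_mul]
  have hf1sq : ∀ k, f1 k ^ 2 = (wgt r k)⁻¹ := fun k =>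
    Real.sq_sqrt (inv_nonneg.2 (hwpos k).le)
  have hf2sq : ∀ k, f2 k ^ 2 = wgt r k * ‖g k‖ ^ 2 := fun k => by
    rw [hf2def, mul_pow, Real.sq_sqrt (hwpos k).le]
  have hM1 : MemLp f1 2 volume :=
    (memLp_two_iff_integrable_sq hf1m.aestronglyMeasurable).2
      (hWint.congr (Eventually.of_forall fun k => (hf1sq k).symm))
  have hM2 : MemLp f2 2 volume :=
    (memLp_two_iff_integrable_sq hf2m.aestronglyMeasurable).2
      (hInt.congr (Eventually.of_forall fun k => (hf2sq k).symm))
  have hg1 : Integrable (fun k => ‖g k‖) := by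
    have hsm : MemLp (f1 • f2) 1 volume :=
      hM2.smul hM1 (hpqr := ⟨by rw [inv_one]; exact ENNReal.inv_two_add_inv_two⟩)
    exact (memLp_one_iff_integrable.1 hsm).congr
      (Eventually.of_forall fun k => by simp [Pi.smul_apply, smul_eq_mul, hmul k])
  have hgint : Integrable g := (integrable_norm_iff hg.aestronglyMeasurable).1 hg1
  have hYnn : 0 ≤ YnormSq r g :=
    integral_nonneg fun k => mul_nonneg (hwpos k).le (sq_nonneg _)
  have hCS : ∫ k : ℝ × ℝ, ‖g k‖ ≤ Real.sqrt A * Real.sqrt (YnormSq r g) := by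
    have hpq : (2:ℝ).HolderConjugate 2 := ⟨by norm_num, by norm_num, by norm_num⟩
    have h2 : ENNReal.ofReal (2:ℝ) = 2 := by norm_num
    have hH := integral_mul_le_Lp_mul_Lq_of_nonneg hpq
      (Eventually.of_forall fun k => Real.sqrt_nonneg _)
      (Eventually.of_forall fun k => mul_nonneg (Real.sqrt_nonneg _) (norm_nonneg _))
      (h2 ▸ hM1) (h2 ▸ hM2)
    simp only [Real.rpow_two] at hH
    calc ∫ k : ℝ × ℝ, ‖g k‖ = ∫ k : ℝ × ℝ, f1 k * f2 k :=
          integral_congr_ae (Eventually.of_forall fun k => (hmul k).symm)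
      _ ≤ (∫ k : ℝ × ℝ, f1 k ^ 2) ^ ((1:ℝ)/2) * (∫ k : ℝ × ℝ, f2 k ^ 2) ^ ((1:ℝ)/2) := hH
      _ = Real.sqrt A * Real.sqrt (YnormSq r g) := by
          rw [← Real.sqrt_eq_rpow, ← Real.sqrt_eq_rpow]
          congr 2
          · exact integral_congr_ae (Eventually.of_forall fun k => hf1sq k)
          · exact integral_congr_ae (Eventually.of_forall fun k => hf2sq k)
  have hexp : ∀ (x k : ℝ × ℝ),
      ‖Complex.exp (((2 * Real.pi * (x.1 * k.1 + x.2 * k.2) : ℝ) : ℂ) * Complex.I) * g k‖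
        = ‖g k‖ := fun x k => by
    rw [norm_mul, Complex.norm_exp_ofReal_mul_I, one_mul]
  constructor
  · unfold invFT
    refine continuous_of_dominated (bound := fun k => ‖g k‖) (fun x => ?_) (fun x => ?_)
      hg1 (Eventually.of_forall fun k => ?_)
    · apply Measurable.aestronglyMeasurable
      apply Measurable.mul _ hg
      apply Measurable.cexp
      fun_prop
    · exact Eventually.of_forall fun k => le_of_eq (hexp x k)
    · apply Continuous.mul _ continuous_const
      apply Continuous.cexp
      fun_prop
  · intro p
    calc ‖invFT g p‖ ≤ ∫ k : ℝ × ℝ,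
          ‖Complex.exp (((2 * Real.pi * (p.1 * k.1 + p.2 * k.2) : ℝ) : ℂ) * Complex.I) * g k‖ :=
          norm_integral_le_integral_norm _
      _ = ∫ k : ℝ × ℝ, ‖g k‖ := integral_congr_ae (Eventually.of_forall fun k => hexp p k)
      _ ≤ Real.sqrt A * Real.sqrt (YnormSq r g) := hCS
      _ ≤ (Real.sqrt A + 1) * Real.sqrt (YnormSq r g) := by
          apply mul_le_mul_of_nonneg_right _ (Real.sqrt_nonneg _)
          linarith
end

section
/- The integral ∫_{ℝ²} (1 + k₁² + k₂²/k₁²)^{-r} dk₁ dk₂ is finite for every r > 3/2. -/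
open MeasureTheory

private lemma key_bound {s : ℝ} (hs : 0 ≤ s) {t b : ℝ} (h : 1 + t ^ 2 ≤ b) :
    b ^ (-s) ≤ 2 ^ s * (1 + |t|) ^ (-(2 * s)) := by
  have h1 : (0:ℝ) < (1 + |t|) ^ 2 / 2 := by positivity
  have h2 : (1 + |t|) ^ 2 / 2 ≤ b := by
    nlinarith [abs_nonneg t, sq_abs t, sq_nonneg (1 - |t|)]
  have h3 : b ^ (-s) ≤ ((1 + |t|) ^ 2 / 2) ^ (-s) :=
    Real.rpow_le_rpow_of_nonpos h1 h2 (by linarith)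
  have h4 : ((1 + |t|) ^ 2 : ℝ) ^ (-s) = (1 + |t|) ^ (-(2 * s)) := by
    rw [← Real.rpow_natCast (1 + |t|) 2, ← Real.rpow_mul (by positivity)]
    norm_num
  calc b ^ (-s) ≤ ((1 + |t|) ^ 2 / 2) ^ (-s) := h3
    _ = 2 ^ s * (1 + |t|) ^ (-(2 * s)) := by
        rw [Real.div_rpow (by positivity) (by norm_num), h4,
          Real.rpow_neg (by norm_num : (0:ℝ) ≤ 2), div_eq_mul_inv, inv_inv, mul_comm]

private lemma integrable_bracket {s : ℝ} (hs : 1 < s) :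
    Integrable (fun t : ℝ => (1 + |t|) ^ (-s)) := by
  have h := integrable_one_add_norm (E := ℝ) (μ := volume) (r := s) (by simpa using hs)
  simpa [Real.norm_eq_abs] using h

private lemma integrable_one_add_sq' {s : ℝ} (hs : 1 / 2 < s) :
    Integrable (fun t : ℝ => (1 + t ^ 2) ^ (-s)) := by
  refine (((integrable_bracket (s := 2 * s) (by linarith)).const_mul ((2:ℝ) ^ s))).mono' ?_ ?_
  · exact Measurable.aestronglyMeasurable (by fun_prop)
  · filter_upwards with t
    rw [Real.norm_of_nonneg (Real.rpow_nonneg (by positivity) _)]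
    exact key_bound (by linarith) le_rfl

/-- The integral `∫_{ℝ²} (1 + k₁² + k₂²/k₁²)^{-r} dk` is finite for every `r > 3/2`. -/
theorem stmt3 (r : ℝ) (hr : 3 / 2 < r) :
    Integrable (fun k : ℝ × ℝ => (1 + k.1 ^ 2 + k.2 ^ 2 / k.1 ^ 2) ^ (-r)) := by
  have hr0 : (0:ℝ) ≤ r := by linarith
  have hFmeas : Measurable (fun k : ℝ × ℝ => (1 + k.1 ^ 2 + k.2 ^ 2 / k.1 ^ 2) ^ (-r)) := by
    fun_prop
  have hae : ∀ᵐ x : ℝ ∂volume, x ≠ 0 := by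
    rw [ae_iff]
    simp
  have hC : Integrable (fun v : ℝ => (1 + v ^ 2) ^ (-r)) := integrable_one_add_sq' (by linarith)
  set C := ∫ v : ℝ, (1 + v ^ 2) ^ (-r) with hCdef
  have hC0 : 0 ≤ C := integral_nonneg fun v => Real.rpow_nonneg (by positivity) _
  -- section integrability
  have hsec : ∀ x : ℝ, x ≠ 0 →
      Integrable (fun y : ℝ => (1 + x ^ 2 + y ^ 2 / x ^ 2) ^ (-r)) := by
    intro x hx
    refine (((integrable_bracket (s := 2 * r) (by linarith)).comp_div hx).const_mul
      ((2:ℝ) ^ r)).mono' ?_ ?_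
    · exact Measurable.aestronglyMeasurable (by fun_prop)
    · filter_upwards with y
      rw [Real.norm_of_nonneg (Real.rpow_nonneg (by positivity) _)]
      refine key_bound hr0 ?_
      rw [div_pow]
      nlinarith [sq_nonneg x]
  -- exact formula for the inner integral
  have hformula : ∀ x : ℝ, x ≠ 0 →
      (∫ y : ℝ, (1 + x ^ 2 + y ^ 2 / x ^ 2) ^ (-r)) =
        |x| * (1 + x ^ 2) ^ ((1:ℝ)/2 - r) * C := by
    intro x hx
    have hpos : (0:ℝ) < 1 + x ^ 2 := by positivity
    set c := x * Real.sqrt (1 + x ^ 2) with hcdef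
    have hc : c ≠ 0 := mul_ne_zero hx (Real.sqrt_ne_zero'.2 hpos)
    have hs : Real.sqrt (1 + x ^ 2) ^ 2 = 1 + x ^ 2 := Real.sq_sqrt hpos.le
    have hval : ∀ v : ℝ, (1 + x ^ 2 + (c * v) ^ 2 / x ^ 2) ^ (-r)
        = (1 + x ^ 2) ^ (-r) * (1 + v ^ 2) ^ (-r) := by
      intro v
      have hcv : (c * v) ^ 2 / x ^ 2 = (1 + x ^ 2) * v ^ 2 := by
        rw [hcdef]
        field_simp
        rw [hs]
      rw [hcv, show 1 + x ^ 2 + (1 + x ^ 2) * v ^ 2 = (1 + x ^ 2) * (1 + v ^ 2) by ring,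
        Real.mul_rpow hpos.le (by positivity)]
    have hsub := Measure.integral_comp_mul_left
      (fun y : ℝ => (1 + x ^ 2 + y ^ 2 / x ^ 2) ^ (-r)) c
    simp only [hval] at hsub
    rw [integral_const_mul, ← hCdef] at hsub
    have habs : |c⁻¹| = (|x| * Real.sqrt (1 + x ^ 2))⁻¹ := by
      rw [abs_inv, hcdef, abs_mul, abs_of_nonneg (Real.sqrt_nonneg _)]
    rw [habs, smul_eq_mul] at hsub
    have hne : (|x| * Real.sqrt (1 + x ^ 2)) ≠ 0 :=
      mul_ne_zero (abs_ne_zero.2 hx) (Real.sqrt_ne_zero'.2 hpos)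
    have h5 : (∫ y : ℝ, (1 + x ^ 2 + y ^ 2 / x ^ 2) ^ (-r))
        = (|x| * Real.sqrt (1 + x ^ 2)) * ((1 + x ^ 2) ^ (-r) * C) := by
      rw [hsub, ← mul_assoc, mul_inv_cancel₀ hne, one_mul]
    have h6 : Real.sqrt (1 + x ^ 2) * (1 + x ^ 2) ^ (-r) = (1 + x ^ 2) ^ ((1:ℝ)/2 - r) := by
      rw [Real.sqrt_eq_rpow, ← Real.rpow_add hpos, sub_eq_add_neg]
    rw [h5, ← h6]
    ring
  rw [show (volume : Measure (ℝ × ℝ)) = (volume : Measure ℝ).prod volume from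
    Measure.volume_eq_prod ℝ ℝ]
  refine (integrable_prod_iff hFmeas.aestronglyMeasurable).2 ⟨?_, ?_⟩
  · filter_upwards [hae] with x hx
    exact hsec x hx
  · -- Integrable (fun x => ∫ y, ‖F (x,y)‖)
    have hG : Integrable (fun x : ℝ => |x| * (1 + x ^ 2) ^ ((1:ℝ)/2 - r) * C) := by
      refine (((integrable_bracket (s := 2 * (r - 1)) (by linarith)).const_mul
        ((2:ℝ) ^ (r - 1) * C)).mono' ?_ ?_)
      · exact Measurable.aestronglyMeasurable (by fun_prop)
      · filter_upwards with x
        have hpos : (0:ℝ) < 1 + x ^ 2 := by positivity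
        have h1 : |x| ≤ (1 + x ^ 2) ^ ((1:ℝ)/2) := by
          rw [← Real.sqrt_eq_rpow, ← Real.sqrt_sq_eq_abs]
          exact Real.sqrt_le_sqrt (by nlinarith)
        have h2 : |x| * (1 + x ^ 2) ^ ((1:ℝ)/2 - r) ≤ (1 + x ^ 2) ^ (-(r - 1)) := by
          calc |x| * (1 + x ^ 2) ^ ((1:ℝ)/2 - r)
              ≤ (1 + x ^ 2) ^ ((1:ℝ)/2) * (1 + x ^ 2) ^ ((1:ℝ)/2 - r) :=
                mul_le_mul_of_nonneg_right h1 (Real.rpow_nonneg hpos.le _)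
            _ = (1 + x ^ 2) ^ (-(r - 1)) := by
                rw [← Real.rpow_add hpos]
                congr 1
                ring
        have h3 : (1 + x ^ 2) ^ (-(r - 1)) ≤ 2 ^ (r - 1) * (1 + |x|) ^ (-(2 * (r - 1))) :=
          key_bound (by linarith) le_rfl
        have hxnn : (0:ℝ) ≤ |x| * (1 + x ^ 2) ^ ((1:ℝ)/2 - r) :=
          mul_nonneg (abs_nonneg x) (Real.rpow_nonneg hpos.le _)
        rw [Real.norm_of_nonneg (mul_nonneg hxnn hC0)]
        calc |x| * (1 + x ^ 2) ^ ((1:ℝ)/2 - r) * C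
            ≤ (2 ^ (r - 1) * (1 + |x|) ^ (-(2 * (r - 1)))) * C :=
              mul_le_mul_of_nonneg_right (h2.trans h3) hC0
          _ = 2 ^ (r - 1) * C * (1 + |x|) ^ (-(2 * (r - 1))) := by ring
    refine hG.congr ?_
    filter_upwards [hae] with x hx
    show |x| * (1 + x ^ 2) ^ ((1:ℝ)/2 - r) * C
      = ∫ y : ℝ, ‖(1 + x ^ 2 + y ^ 2 / x ^ 2) ^ (-r)‖
    have h1 : (∫ y : ℝ, ‖(1 + x ^ 2 + y ^ 2 / x ^ 2) ^ (-r)‖)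
        = ∫ y : ℝ, (1 + x ^ 2 + y ^ 2 / x ^ 2) ^ (-r) :=
      integral_congr_ae (Filter.Eventually.of_forall fun y =>
        Real.norm_of_nonneg (Real.rpow_nonneg (by positivity) _))
    rw [h1, hformula x hx]
end

section
/- Let W be a Banach space, W₀ and Λ₀ open neighbourhoods of w* ∈ W and 0 ∈ ℝ respectively, and G : W₀ × Λ₀ → W differentiable in w for each λ, with G(w*,0)=0, d₁G[w*,0] an isomorphism of W, d₁G[·,0] continuous at w*, and G(w,λ) → G(w,0), d₁G[w,λ] → d₁G[w,0] as λ → 0 uniformly over w ∈ W₀. Then there exist open neighbourhoods W ⊆ W₀ of w* and Λ ⊆ Λ₀ of 0 and a unique map h : Λ → W with h continuous at 0, h(0) = w*, G(h(λ),λ) = 0 for all λ ∈ Λ, and any solution (w,λ) ∈ W × Λ of G(w,λ)=0 satisfies w = h(λ). -/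
/-- Low-regularity implicit function theorem: `G` is differentiable in `w` for each `λ`,
`G(w*,0) = 0`, `d₁G[w*,0]` is an isomorphism, `d₁G[·,0]` is continuous at `w*`, and
`G(·,λ) → G(·,0)`, `d₁G[·,λ] → d₁G[·,0]` as `λ → 0` uniformly on `W₀`. Then there are
neighbourhoods `W' ∋ w*`, `Λ' ∋ 0` and a map `h` continuous at `0` with `h 0 = w*`,
`G(h(λ),λ) = 0` on `Λ'`, and any zero of `G(·,λ)` in `W'` equals `h(λ)`. -/
theorem stmt6 {W : Type*} [NormedAddCommGroup W] [NormedSpace ℝ W] [CompleteSpace W]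
    (W₀ : Set W) (Λ₀ : Set ℝ) (hW₀ : IsOpen W₀) (hΛ₀ : IsOpen Λ₀)
    (wst : W) (hwst : wst ∈ W₀) (h0 : (0 : ℝ) ∈ Λ₀)
    (G : W → ℝ → W) (dG : W → ℝ → (W →L[ℝ] W))
    (hdiff : ∀ lam ∈ Λ₀, ∀ w ∈ W₀, HasFDerivAt (fun v => G v lam) (dG w lam) w)
    (hG0 : G wst 0 = 0)
    (hiso : ∃ e : W ≃L[ℝ] W, (e : W →L[ℝ] W) = dG wst 0)
    (hcont : Filter.Tendsto (fun w => dG w 0) (nhds wst) (nhds (dG wst 0)))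
    (hunif : ∀ η > (0 : ℝ), ∃ τ > (0 : ℝ), ∀ lam ∈ Λ₀, |lam| < τ → ∀ w ∈ W₀,
      ‖G w lam - G w 0‖ ≤ η ∧ ‖dG w lam - dG w 0‖ ≤ η) :
    ∃ W' ⊆ W₀, ∃ Λ' ⊆ Λ₀, IsOpen W' ∧ IsOpen Λ' ∧ wst ∈ W' ∧ (0 : ℝ) ∈ Λ' ∧
      ∃ h : ℝ → W, ContinuousAt h 0 ∧ h 0 = wst ∧
        (∀ lam ∈ Λ', h lam ∈ W' ∧ G (h lam) lam = 0) ∧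
        (∀ lam ∈ Λ', ∀ w ∈ W', G w lam = 0 → w = h lam) := by
  classical
  obtain ⟨e, he⟩ := hiso
  set E : W →L[ℝ] W := (e : W →L[ℝ] W) with hE
  set Ei : W →L[ℝ] W := (e.symm : W →L[ℝ] W) with hEi
  set D : ℝ := ‖Ei‖ + 1 with hDdef
  have hD0 : (0 : ℝ) < D := by positivity
  have hDe : ∀ x : W, ‖Ei x‖ ≤ D * ‖x‖ := fun x =>
    (Ei.le_opNorm x).trans (by nlinarith [norm_nonneg x])
  have hκ0 : (0 : ℝ) < 1 / (4 * D) := by positivity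
  rw [Metric.tendsto_nhds_nhds] at hcont
  obtain ⟨r₁, hr₁0, hr₁⟩ := hcont _ hκ0
  obtain ⟨r₂, hr₂0, hr₂⟩ := Metric.isOpen_iff.1 hW₀ wst hwst
  set r : ℝ := min (r₁ / 2) (r₂ / 2) with hrdef
  have hrr₁ : r ≤ r₁ / 2 := min_le_left _ _
  have hrr₂ : r ≤ r₂ / 2 := min_le_right _ _
  have hr0 : 0 < r := lt_min (by linarith) (by linarith)
  set s : Set W := Metric.closedBall wst r with hsdef
  have hwsts : wst ∈ s := Metric.mem_closedBall_self hr0.le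
  have hsub : s ⊆ W₀ := fun u hu => hr₂ (by
    have h1 : dist u wst ≤ r := Metric.mem_closedBall.1 hu
    exact Metric.mem_ball.2 (by linarith))
  have hder0 : ∀ u ∈ s, ‖dG u 0 - E‖ ≤ 1 / (4 * D) := by
    intro u hu
    have h1 : dist u wst ≤ r := Metric.mem_closedBall.1 hu
    have h2 : dist (dG u 0) (dG wst 0) < 1 / (4 * D) := hr₁ (by linarith)
    rw [dist_eq_norm] at h2
    rw [he]
    exact h2.le
  set η : ℝ := min (1 / (4 * D)) (r / (4 * D)) with hηdef
  have hη0 : 0 < η := lt_min hκ0 (by positivity)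
  obtain ⟨τ, hτ0, hτ⟩ := hunif η hη0
  set Λ' : Set ℝ := Metric.ball (0 : ℝ) τ ∩ Λ₀ with hΛ'def
  set W' : Set W := Metric.ball wst r with hW'def
  have hW'sub : W' ⊆ s := Metric.ball_subset_closedBall
  -- key per-λ statement
  have key : ∀ lam ∈ Λ', ∃ y, y ∈ s ∧ G y lam = 0 ∧ ‖y - wst‖ ≤ 2 * D * ‖G wst lam‖ ∧
      ∀ v ∈ s, G v lam = 0 → v = y := by
    intro lam hlam
    have hlamΛ₀ : lam ∈ Λ₀ := hlam.2
    have hlamτ : |lam| < τ := by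
      have := Metric.mem_ball.1 hlam.1
      rwa [Real.dist_0_eq_abs] at this
    have hub := hτ lam hlamΛ₀ hlamτ
    -- derivative bound on s
    have hdb : ∀ u ∈ s, ‖dG u lam - E‖ ≤ 1 / (2 * D) := by
      intro u hu
      have h1 : ‖dG u lam - dG u 0‖ ≤ η := (hub u (hsub hu)).2
      have h2 : ‖dG u 0 - E‖ ≤ 1 / (4 * D) := hder0 u hu
      have h3 : ‖dG u lam - E‖ ≤ ‖dG u lam - dG u 0‖ + ‖dG u 0 - E‖ :=
        norm_sub_le_norm_sub_add_norm_sub _ _ _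
      have h4 : η ≤ 1 / (4 * D) := min_le_left _ _
      have : (1 : ℝ) / (4 * D) + 1 / (4 * D) = 1 / (2 * D) := by field_simp; ring
      linarith
    -- mean value inequality
    have mvt : ∀ w ∈ s, ∀ v ∈ s, ‖G w lam - G v lam - E (w - v)‖ ≤ (1 / (2 * D)) * ‖w - v‖ := by
      intro w hw v hv
      exact (convex_closedBall wst r).norm_image_sub_le_of_norm_hasFDerivWithin_le'
        (fun x hx => (hdiff lam hlamΛ₀ x (hsub hx)).hasFDerivWithinAt) hdb hv hw
    set Φ : W → W := fun w => w - Ei (G w lam) with hΦdef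
    -- contraction estimate
    have hc : ∀ w ∈ s, ∀ v ∈ s, ‖Φ w - Φ v‖ ≤ (1 / 2) * ‖w - v‖ := by
      intro w hw v hv
      have heq : Φ w - Φ v = Ei (E (w - v) - (G w lam - G v lam)) := by
        simp only [hΦdef, map_sub, hEi, hE, ContinuousLinearEquiv.coe_coe,
          e.symm_apply_apply]
        abel
      rw [heq]
      calc ‖Ei (E (w - v) - (G w lam - G v lam))‖
          ≤ D * ‖E (w - v) - (G w lam - G v lam)‖ := hDe _
        _ = D * ‖G w lam - G v lam - E (w - v)‖ := by rw [norm_sub_rev]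
        _ ≤ D * ((1 / (2 * D)) * ‖w - v‖) := by
            exact mul_le_mul_of_nonneg_left (mvt w hw v hv) hD0.le
        _ = (1 / 2) * ‖w - v‖ := by field_simp
    -- bound on ‖Φ wst - wst‖
    have hGwst : ‖G wst lam‖ ≤ r / (4 * D) := by
      have h1 : ‖G wst lam - G wst 0‖ ≤ η := (hub wst hwst).1
      rw [hG0, sub_zero] at h1
      exact h1.trans (min_le_right _ _)
    have hΦwst : ‖Φ wst - wst‖ ≤ r / 4 := by
      have : Φ wst - wst = -(Ei (G wst lam)) := by simp [hΦdef]
      rw [this, norm_neg]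
      calc ‖Ei (G wst lam)‖ ≤ D * ‖G wst lam‖ := hDe _
        _ ≤ D * (r / (4 * D)) := mul_le_mul_of_nonneg_left hGwst hD0.le
        _ = r / 4 := by field_simp
    -- self-mapping
    have hmaps : Set.MapsTo Φ s s := by
      intro w hw
      have h1 : ‖Φ w - wst‖ ≤ ‖Φ w - Φ wst‖ + ‖Φ wst - wst‖ :=
        norm_sub_le_norm_sub_add_norm_sub _ _ _
      have h2 : ‖Φ w - Φ wst‖ ≤ (1 / 2) * ‖w - wst‖ := hc w hw wst hwsts
      have h3 : ‖w - wst‖ ≤ r := by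
        have := Metric.mem_closedBall.1 hw
        rwa [dist_eq_norm] at this
      refine Metric.mem_closedBall.2 ?_
      rw [dist_eq_norm]
      linarith
    -- contraction on s
    have hsc : IsComplete s := Metric.isClosed_closedBall.isComplete
    have hcontr : ContractingWith (1 / 2 : NNReal) (hmaps.restrict Φ s s) := by
      constructor
      · rw [← NNReal.coe_lt_coe]; norm_num
      · refine LipschitzWith.of_dist_le_mul fun x y => ?_
        have := hc x x.2 y y.2
        rw [Subtype.dist_eq, Subtype.dist_eq]
        simp only [Set.MapsTo.val_restrict_apply]
        rw [dist_eq_norm, dist_eq_norm]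
        simpa using this
    obtain ⟨y, hys, hyfix, -, -⟩ :=
      ContractingWith.exists_fixedPoint' hsc hmaps hcontr hwsts (edist_ne_top _ _)
    -- y is a zero of G
    have hfix_iff : ∀ v : W, Φ v = v ↔ G v lam = 0 := by
      intro v
      constructor
      · intro hv
        have h1 : Ei (G v lam) = 0 := by
          have : v - Ei (G v lam) = v := hv
          have := sub_eq_self.1 this
          exact this
        have h2 := congrArg e h1
        rw [map_zero] at h2
        rw [hEi] at h2
        simpa using h2
      · intro hv
        simp [hΦdef, hv]
    have hyzero : G y lam = 0 := (hfix_iff y).1 hyfix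
    -- bound for any fixed point
    have hbound : ‖y - wst‖ ≤ 2 * D * ‖G wst lam‖ := by
      have h1 : ‖y - wst‖ ≤ ‖y - Φ wst‖ + ‖Φ wst - wst‖ :=
        norm_sub_le_norm_sub_add_norm_sub _ _ _
      have h2 : ‖y - Φ wst‖ ≤ (1 / 2) * ‖y - wst‖ := by
        have := hc y hys wst hwsts
        rwa [hyfix] at this
      have h3 : ‖Φ wst - wst‖ ≤ D * ‖G wst lam‖ := by
        have : Φ wst - wst = -(Ei (G wst lam)) := by simp [hΦdef]
        rw [this, norm_neg]; exact hDe _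
      linarith
    refine ⟨y, hys, hyzero, hbound, ?_⟩
    intro v hv hvzero
    have hvfix : Φ v = v := (hfix_iff v).2 hvzero
    have h1 : ‖v - y‖ ≤ (1 / 2) * ‖v - y‖ := by
      have := hc v hv y hys
      rwa [hvfix, hyfix] at this
    have h2 : ‖v - y‖ = 0 := by linarith [norm_nonneg (v - y)]
    have := norm_eq_zero.1 h2
    exact sub_eq_zero.1 this
  -- define h
  set h : ℝ → W := fun lam => if hl : lam ∈ Λ' then (key lam hl).choose else wst with hhdef
  have hspec : ∀ lam (hl : lam ∈ Λ'), h lam ∈ s ∧ G (h lam) lam = 0 ∧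
      ‖h lam - wst‖ ≤ 2 * D * ‖G wst lam‖ ∧ ∀ v ∈ s, G v lam = 0 → v = h lam := by
    intro lam hl
    simp only [hhdef, dif_pos hl]
    exact (key lam hl).choose_spec
  have h0Λ' : (0 : ℝ) ∈ Λ' := ⟨Metric.mem_ball_self hτ0, h0⟩
  have hh0 : h 0 = wst := by
    obtain ⟨-, -, -, huniq⟩ := hspec 0 h0Λ'
    exact (huniq wst hwsts hG0).symm
  -- membership in W' and smallness over Λ'
  have hGsmall : ∀ lam ∈ Λ', ‖G wst lam‖ ≤ r / (4 * D) := by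
    intro lam hlam
    have hlamτ : |lam| < τ := by
      have := Metric.mem_ball.1 hlam.1
      rwa [Real.dist_0_eq_abs] at this
    have h1 : ‖G wst lam - G wst 0‖ ≤ η := (hτ lam hlam.2 hlamτ wst hwst).1
    rw [hG0, sub_zero] at h1
    exact h1.trans (min_le_right _ _)
  have hmemW' : ∀ lam ∈ Λ', h lam ∈ W' := by
    intro lam hlam
    obtain ⟨-, -, hb, -⟩ := hspec lam hlam
    have h1 : 2 * D * ‖G wst lam‖ ≤ 2 * D * (r / (4 * D)) :=
      mul_le_mul_of_nonneg_left (hGsmall lam hlam) (by positivity)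
    have h2 : 2 * D * (r / (4 * D)) = r / 2 := by field_simp; ring
    have h4 : ‖h lam - wst‖ ≤ r / 2 := hb.trans (h1.trans (le_of_eq h2))
    refine Metric.mem_ball.2 ?_
    rw [dist_eq_norm]
    exact lt_of_le_of_lt h4 (half_lt_self hr0)
  -- continuity at 0
  have hcontat : ContinuousAt h 0 := by
    rw [Metric.continuousAt_iff]
    intro ε hε
    obtain ⟨τ', hτ'0, hτ'⟩ := hunif (ε / (4 * D)) (by positivity)
    refine ⟨τ', hτ'0, ?_⟩
    intro lam hlamd
    rw [Real.dist_0_eq_abs] at hlamd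
    rw [hh0]
    by_cases hl : lam ∈ Λ'
    · obtain ⟨-, -, hb, -⟩ := hspec lam hl
      have h1 : ‖G wst lam - G wst 0‖ ≤ ε / (4 * D) := (hτ' lam hl.2 hlamd wst hwst).1
      rw [hG0, sub_zero] at h1
      have h2 : 2 * D * ‖G wst lam‖ ≤ 2 * D * (ε / (4 * D)) :=
        mul_le_mul_of_nonneg_left h1 (by positivity)
      have h3 : 2 * D * (ε / (4 * D)) = ε / 2 := by field_simp; ring
      have h4 : ‖h lam - wst‖ ≤ ε / 2 := hb.trans (h2.trans (le_of_eq h3))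
      rw [dist_eq_norm]
      exact lt_of_le_of_lt h4 (half_lt_self hε)
    · simp only [hhdef, dif_neg hl]
      simpa using hε
  refine ⟨W', fun u hu => hsub (hW'sub hu), Λ', Set.inter_subset_right,
    Metric.isOpen_ball, (Metric.isOpen_ball).inter hΛ₀, Metric.mem_ball_self hr0,
    h0Λ', h, hcontat, hh0, ?_, ?_⟩
  · intro lam hlam
    exact ⟨hmemW' lam hlam, (hspec lam hlam).2.1⟩
  · intro lam hlam w hw hwzero
    obtain ⟨-, -, -, huniq⟩ := hspec lam hlam
    exact huniq w (hW'sub hw) hwzero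
end
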